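/- For every n ∈ ℕ, SL_n(A(p)) = E_n(A(p)): every n×n matrix M over A(p) with determinant equal to the identity ε is a finite product of elementary matrices, i.e., of matrices of the form I_n + α·e_{ij} with i ≠ j and α ∈ A(p), where e_{ij} is the matrix with entry ε in position (i,j) and 0 elsewhere (I_n being the identity matrix with ε on the diagonal). -/

import Mathlib

open scoped BigOperators

/-- `Complex.abs` was removed from Mathlib; restored with its old meaning `z ↦ ‖z‖`. -/
noncomputable def Complex.abs : AbsoluteValue ℂ ℝ where
  toFun z := ‖z‖
  map_mul' := norm_mul
  nonneg' := norm_nonneg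
  eq_zero' _ := norm_eq_zero
  add_le' := norm_add_le

theorem Complex.abs_ofReal (r : ℝ) : Complex.abs (r : ℂ) = |r| := by
  show ‖(r : ℂ)‖ = |r|
  rw [Complex.norm_real, Real.norm_eq_abs]

theorem Complex.norm_eq_abs (z : ℂ) : ‖z‖ = Complex.abs z := rfl

/-- A weight: a sequence of positive reals. -/
structure GoodWeight : Type where
  p : ℕ → ℝ
  pos : ∀ n, 0 < p n

namespace GoodWeight

/-- The growth condition `lim_{n→∞} p(n)^(1/n) = ∞`. -/
def Grows (w : GoodWeight) : Prop :=
  Filter.Tendsto (fun n : ℕ => w.p n ^ ((n : ℝ)⁻¹)) Filter.atTop Filter.atTop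

/-- The Banach algebra `A(p)`, in its sequence model: a sequence `a : ℕ → ℂ` (the
Taylor coefficients at `0` of the corresponding entire function) such that
`sup_n p(n)|a(n)| < ∞`. -/
def Ap (w : GoodWeight) : Type :=
  {a : ℕ → ℂ // ∃ C : ℝ, ∀ n, w.p n * Complex.abs (a n) ≤ C}

namespace Ap

variable {w : GoodWeight}

instance : Zero w.Ap :=
  ⟨⟨fun _ => 0, 0, fun n => by simp⟩⟩

instance : Add w.Ap :=
  ⟨fun a b =>
    ⟨fun n => a.1 n + b.1 n, by
      obtain ⟨C, hC⟩ := a.2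
      obtain ⟨D, hD⟩ := b.2
      refine ⟨C + D, fun n => ?_⟩
      have h1 : Complex.abs (a.1 n + b.1 n) ≤ Complex.abs (a.1 n) + Complex.abs (b.1 n) :=
        Complex.abs.add_le _ _
      calc w.p n * Complex.abs (a.1 n + b.1 n)
          ≤ w.p n * Complex.abs (a.1 n) + w.p n * Complex.abs (b.1 n) := by
            rw [← mul_add]; exact mul_le_mul_of_nonneg_left h1 (w.pos n).le
        _ ≤ C + D := add_le_add (hC n) (hD n)⟩⟩

instance : Neg w.Ap :=
  ⟨fun a =>
    ⟨fun n => -a.1 n, by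
      obtain ⟨C, hC⟩ := a.2
      exact ⟨C, fun n => by simpa using hC n⟩⟩⟩

/-- The weighted Hadamard multiplication `(f ∗ g)(n) = p(n) f̂(n) ĝ(n)`. -/
instance : Mul w.Ap :=
  ⟨fun a b =>
    ⟨fun n => (w.p n : ℂ) * a.1 n * b.1 n, by
      obtain ⟨C, hC⟩ := a.2
      obtain ⟨D, hD⟩ := b.2
      refine ⟨C * D, fun n => ?_⟩
      have e : w.p n * Complex.abs ((w.p n : ℂ) * a.1 n * b.1 n)
          = (w.p n * Complex.abs (a.1 n)) * (w.p n * Complex.abs (b.1 n)) := by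
        rw [map_mul, map_mul, Complex.abs_ofReal, abs_of_pos (w.pos n)]; ring
      rw [e]
      have h0C : (0:ℝ) ≤ C :=
        le_trans (mul_nonneg (w.pos 0).le (Complex.abs.nonneg _)) (hC 0)
      exact mul_le_mul (hC n) (hD n) (mul_nonneg (w.pos n).le (Complex.abs.nonneg _)) h0C⟩⟩

/-- The identity element `ε`, with coefficients `1/p(n)`. -/
noncomputable instance : One w.Ap :=
  ⟨⟨fun n => ((w.p n : ℂ))⁻¹, 1, fun n => by
      rw [map_inv₀, Complex.abs_ofReal, abs_of_pos (w.pos n),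
        mul_inv_cancel₀ (w.pos n).ne']⟩⟩

instance : SMul ℂ w.Ap :=
  ⟨fun c a =>
    ⟨fun n => c * a.1 n, by
      obtain ⟨C, hC⟩ := a.2
      refine ⟨Complex.abs c * C, fun n => ?_⟩
      rw [map_mul]
      calc w.p n * (Complex.abs c * Complex.abs (a.1 n))
          = Complex.abs c * (w.p n * Complex.abs (a.1 n)) := by ring
        _ ≤ Complex.abs c * C := mul_le_mul_of_nonneg_left (hC n) (Complex.abs.nonneg c)⟩⟩

noncomputable instance : CommRing w.Ap where
  add := (· + ·)
  add_assoc a b c := Subtype.ext (funext fun n => add_assoc _ _ _)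
  zero := 0
  zero_add a := Subtype.ext (funext fun n => zero_add _)
  add_zero a := Subtype.ext (funext fun n => add_zero _)
  add_comm a b := Subtype.ext (funext fun n => add_comm _ _)
  nsmul := nsmulRec
  zsmul := zsmulRec
  mul := (· * ·)
  mul_assoc a b c := Subtype.ext (funext fun n => by
    show (w.p n : ℂ) * ((w.p n : ℂ) * a.1 n * b.1 n) * c.1 n
        = (w.p n : ℂ) * a.1 n * ((w.p n : ℂ) * b.1 n * c.1 n)
    ring)
  one := 1
  one_mul a := Subtype.ext (funext fun n => by
    show (w.p n : ℂ) * ((w.p n : ℂ))⁻¹ * a.1 n = a.1 n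
    have h : ((w.p n : ℝ) : ℂ) ≠ 0 := by exact_mod_cast (w.pos n).ne'
    rw [mul_inv_cancel₀ h, one_mul])
  mul_one a := Subtype.ext (funext fun n => by
    show (w.p n : ℂ) * a.1 n * ((w.p n : ℂ))⁻¹ = a.1 n
    have h : ((w.p n : ℝ) : ℂ) ≠ 0 := by exact_mod_cast (w.pos n).ne'
    field_simp)
  left_distrib a b c := Subtype.ext (funext fun n => by
    show (w.p n : ℂ) * a.1 n * (b.1 n + c.1 n)
        = (w.p n : ℂ) * a.1 n * b.1 n + (w.p n : ℂ) * a.1 n * c.1 n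
    ring)
  right_distrib a b c := Subtype.ext (funext fun n => by
    show (w.p n : ℂ) * (a.1 n + b.1 n) * c.1 n
        = (w.p n : ℂ) * a.1 n * c.1 n + (w.p n : ℂ) * b.1 n * c.1 n
    ring)
  zero_mul a := Subtype.ext (funext fun n => by
    show (w.p n : ℂ) * 0 * a.1 n = 0
    ring)
  mul_zero a := Subtype.ext (funext fun n => by
    show (w.p n : ℂ) * a.1 n * 0 = 0
    ring)
  mul_comm a b := Subtype.ext (funext fun n => by
    show (w.p n : ℂ) * a.1 n * b.1 n = (w.p n : ℂ) * b.1 n * a.1 n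
    ring)
  neg := Neg.neg
  neg_add_cancel a := Subtype.ext (funext fun n => neg_add_cancel _)

instance : Module ℂ w.Ap where
  smul := (· • ·)
  one_smul a := Subtype.ext (funext fun n => by
    show (1 : ℂ) * a.1 n = a.1 n
    ring)
  mul_smul c d a := Subtype.ext (funext fun n => by
    show (c * d) * a.1 n = c * (d * a.1 n)
    ring)
  smul_zero c := Subtype.ext (funext fun n => by
    show c * 0 = 0
    ring)
  smul_add c a b := Subtype.ext (funext fun n => by
    show c * (a.1 n + b.1 n) = c * a.1 n + c * b.1 n
    ring)
  add_smul c d a := Subtype.ext (funext fun n => by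
    show (c + d) * a.1 n = c * a.1 n + d * a.1 n
    ring)
  zero_smul a := Subtype.ext (funext fun n => by
    show (0 : ℂ) * a.1 n = 0
    ring)

noncomputable instance : Algebra ℂ w.Ap :=
  Algebra.ofModule
    (fun c a b => Subtype.ext (funext fun n => by
      show (w.p n : ℂ) * (c * a.1 n) * b.1 n = c * ((w.p n : ℂ) * a.1 n * b.1 n)
      ring))
    (fun c a b => Subtype.ext (funext fun n => by
      show (w.p n : ℂ) * a.1 n * (c * b.1 n) = c * ((w.p n : ℂ) * a.1 n * b.1 n)
      ring))

theorem bddAbove (a : w.Ap) :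
    BddAbove (Set.range fun n => w.p n * Complex.abs (a.1 n)) := by
  obtain ⟨C, hC⟩ := a.2
  exact ⟨C, by rintro x ⟨k, rfl⟩; exact hC k⟩

/-- The norm `‖f‖ = sup_n p(n) |f̂(n)|`, as an `AddGroupNorm`. -/
noncomputable def gnorm (w : GoodWeight) : AddGroupNorm w.Ap where
  toFun a := ⨆ n, w.p n * Complex.abs (a.1 n)
  map_zero' := by
    have h : ∀ n : ℕ, w.p n * Complex.abs ((0 : w.Ap).1 n) = 0 := fun n => by
      show w.p n * Complex.abs 0 = 0; simp
    simp [h]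
  add_le' a b := by
    apply ciSup_le
    intro n
    have h1 : Complex.abs (a.1 n + b.1 n) ≤ Complex.abs (a.1 n) + Complex.abs (b.1 n) :=
      Complex.abs.add_le _ _
    calc w.p n * Complex.abs ((a + b).1 n)
        ≤ w.p n * Complex.abs (a.1 n) + w.p n * Complex.abs (b.1 n) := by
          rw [← mul_add]; exact mul_le_mul_of_nonneg_left h1 (w.pos n).le
      _ ≤ (⨆ k, w.p k * Complex.abs (a.1 k)) + ⨆ k, w.p k * Complex.abs (b.1 k) :=
          add_le_add (le_ciSup (bddAbove a) n) (le_ciSup (bddAbove b) n)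
  neg' a := by
    have h : (fun n => w.p n * Complex.abs ((-a).1 n))
        = fun n => w.p n * Complex.abs (a.1 n) := by
      funext n
      show w.p n * Complex.abs (-a.1 n) = w.p n * Complex.abs (a.1 n)
      rw [AbsoluteValue.map_neg]
    show (⨆ n, w.p n * Complex.abs ((-a).1 n)) = ⨆ n, w.p n * Complex.abs (a.1 n)
    rw [h]
  eq_zero_of_map_eq_zero' a h := by
    apply Subtype.ext
    funext n
    have h1 : w.p n * Complex.abs (a.1 n) ≤ 0 := h ▸ le_ciSup (bddAbove a) n
    have h2 : (0:ℝ) ≤ w.p n * Complex.abs (a.1 n) :=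
      mul_nonneg (w.pos n).le (Complex.abs.nonneg _)
    have h3 : Complex.abs (a.1 n) = 0 := by
      rcases mul_eq_zero.mp (le_antisymm h1 h2) with h' | h'
      · exact absurd h' (w.pos n).ne'
      · exact h'
    exact Complex.abs.eq_zero.mp h3

noncomputable instance : NormedAddCommGroup w.Ap :=
  (gnorm w).toNormedAddCommGroup

theorem norm_def (a : w.Ap) : ‖a‖ = ⨆ n, w.p n * Complex.abs (a.1 n) := rfl

theorem le_norm (a : w.Ap) (n : ℕ) : w.p n * Complex.abs (a.1 n) ≤ ‖a‖ :=
  le_ciSup (bddAbove a) n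

theorem norm_nonneg' (a : w.Ap) : 0 ≤ ‖a‖ :=
  le_trans (mul_nonneg (w.pos 0).le (Complex.abs.nonneg _)) (le_norm a 0)

noncomputable instance : NormedCommRing w.Ap :=
  { (inferInstance : NormedAddCommGroup w.Ap), (inferInstance : CommRing w.Ap) with
    norm_mul_le := by
      intro a b
      apply ciSup_le
      intro n
      have e : w.p n * Complex.abs ((a * b).1 n)
          = (w.p n * Complex.abs (a.1 n)) * (w.p n * Complex.abs (b.1 n)) := by
        show w.p n * Complex.abs ((w.p n : ℂ) * a.1 n * b.1 n) = _
        rw [map_mul, map_mul, Complex.abs_ofReal, abs_of_pos (w.pos n)]; ring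
      rw [e]
      exact mul_le_mul (le_norm a n) (le_norm b n)
        (mul_nonneg (w.pos n).le (Complex.abs.nonneg _)) (norm_nonneg' a) }

noncomputable instance : NormedSpace ℂ w.Ap where
  norm_smul_le c a := by
    apply ciSup_le
    intro n
    have e : w.p n * Complex.abs ((c • a).1 n)
        = Complex.abs c * (w.p n * Complex.abs (a.1 n)) := by
      show w.p n * Complex.abs (c * a.1 n) = _
      rw [map_mul]; ring
    rw [e]
    calc Complex.abs c * (w.p n * Complex.abs (a.1 n))
        ≤ Complex.abs c * ‖a‖ := mul_le_mul_of_nonneg_left (le_norm a n) (Complex.abs.nonneg c)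
      _ = ‖c‖ * ‖a‖ := by rw [Complex.norm_eq_abs]

noncomputable instance : NormedAlgebra ℂ w.Ap :=
  { (inferInstance : Algebra ℂ w.Ap) with
    norm_smul_le := fun c a => norm_smul_le c a }

end Ap

end GoodWeight


open Matrix



section ElemProd
variable {R : Type*} [CommRing R] {N : ℕ}

/-- `M` is a finite product of transvections. -/
def IsElemProd (M : Matrix (Fin N) (Fin N) R) : Prop :=
  ∃ L : List (Matrix (Fin N) (Fin N) R),
    (∀ E ∈ L, ∃ (i j : Fin N) (c : R), i ≠ j ∧ E = Matrix.transvection i j c) ∧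
    L.prod = M

theorem IsElemProd.one : IsElemProd (1 : Matrix (Fin N) (Fin N) R) :=
  ⟨[], by simp, by simp⟩

theorem IsElemProd.mul {A B : Matrix (Fin N) (Fin N) R} (hA : IsElemProd A)
    (hB : IsElemProd B) : IsElemProd (A * B) := by
  obtain ⟨LA, hLA, rfl⟩ := hA
  obtain ⟨LB, hLB, rfl⟩ := hB
  refine ⟨LA ++ LB, ?_, by simp [List.prod_append]⟩
  intro E hE
  rcases List.mem_append.mp hE with h | h
  exacts [hLA E h, hLB E h]

theorem isElemProd_transvection {i j : Fin N} (h : i ≠ j) (c : R) :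
    IsElemProd (Matrix.transvection i j c) :=
  ⟨[Matrix.transvection i j c], by intro E hE; simp at hE; subst hE; exact ⟨i, j, c, h, rfl⟩,
    by simp⟩

theorem transvection_transpose' {i j : Fin N} (c : R) :
    (Matrix.transvection i j c)ᵀ = Matrix.transvection j i c := by
  ext a b
  simp only [Matrix.transvection, Matrix.transpose_apply, Matrix.add_apply,
    Matrix.one_apply, Matrix.single, Matrix.of_apply]
  by_cases h1 : a = b <;> by_cases h2 : i = b <;> by_cases h3 : j = a <;>
    simp_all [eq_comm]

theorem IsElemProd.transpose {A : Matrix (Fin N) (Fin N) R} (hA : IsElemProd A) :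
    IsElemProd Aᵀ := by
  obtain ⟨L, hL, rfl⟩ := hA
  rw [Matrix.transpose_list_prod]
  refine ⟨(L.map Matrix.transpose).reverse, ?_, rfl⟩
  intro E hE
  rw [List.mem_reverse, List.mem_map] at hE
  obtain ⟨F, hF, rfl⟩ := hE
  obtain ⟨i, j, c, hij, rfl⟩ := hL F hF
  exact ⟨j, i, c, hij.symm, transvection_transpose' c⟩

end ElemProd

section RowCol
variable {R : Type*} [CommRing R] {n : ℕ}

/-- Add `c j` times row `j` to row `0`, simultaneously for all `j ≠ 0`. -/
def rowAdd (c : Fin (n + 1) → R) : Matrix (Fin (n + 1)) (Fin (n + 1)) R :=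
  Matrix.of fun i j => (if i = j then 1 else 0) + if i = 0 ∧ j ≠ 0 then c j else 0

/-- Add `c i` times row `0` to row `i`, simultaneously for all `i ≠ 0`. -/
def colAdd (c : Fin (n + 1) → R) : Matrix (Fin (n + 1)) (Fin (n + 1)) R :=
  Matrix.of fun i j => (if i = j then 1 else 0) + if j = 0 ∧ i ≠ 0 then c i else 0

theorem colAdd_eq_transpose (c : Fin (n + 1) → R) : colAdd c = (rowAdd c)ᵀ := by
  ext i j
  simp only [colAdd, rowAdd, Matrix.transpose_apply, Matrix.of_apply]
  by_cases h : i = j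
  · subst h; rfl
  · simp [h, Ne.symm h]

theorem rowAdd_mul_apply_zero (c : Fin (n + 1) → R) (M : Matrix (Fin (n + 1)) (Fin (n + 1)) R)
    (j : Fin (n + 1)) :
    (rowAdd c * M) 0 j = M 0 j + ∑ k, if k = 0 then 0 else c k * M k j := by
  rw [Matrix.mul_apply]
  have : ∀ k, rowAdd c 0 k * M k j
      = (if k = 0 then M 0 j else 0) + (if k = 0 then 0 else c k * M k j) := by
    intro k
    by_cases hk : k = 0 <;> simp [rowAdd, hk, eq_comm]
  rw [Finset.sum_congr rfl fun k _ => this k, Finset.sum_add_distrib,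
    Finset.sum_ite_eq' Finset.univ 0 (fun _ => M 0 j)]
  simp

theorem rowAdd_mul_apply_ne (c : Fin (n + 1) → R) (M : Matrix (Fin (n + 1)) (Fin (n + 1)) R)
    {i : Fin (n + 1)} (hi : i ≠ 0) (j : Fin (n + 1)) :
    (rowAdd c * M) i j = M i j := by
  rw [Matrix.mul_apply]
  have : ∀ k, rowAdd c i k * M k j = if k = i then M i j else 0 := by
    intro k
    by_cases hk : k = i
    · subst hk; simp [rowAdd, hi]
    · simp [rowAdd, hi, Ne.symm hk, hk]
  rw [Finset.sum_congr rfl fun k _ => this k, Finset.sum_ite_eq' Finset.univ i (fun _ => M i j)]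
  simp

theorem colAdd_mul_apply (c : Fin (n + 1) → R) (M : Matrix (Fin (n + 1)) (Fin (n + 1)) R)
    (i j : Fin (n + 1)) :
    (colAdd c * M) i j = M i j + if i = 0 then 0 else c i * M 0 j := by
  rw [Matrix.mul_apply]
  have : ∀ k, colAdd c i k * M k j
      = (if k = i then M i j else 0) + (if k = 0 then (if i = 0 then 0 else c i * M 0 j) else 0) := by
    intro k
    by_cases hk0 : k = 0
    · subst hk0
      by_cases hi : i = 0
      · subst hi; simp [colAdd]
      · simp [colAdd, hi, Ne.symm hi]
    · by_cases hki : k = i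
      · subst hki; simp [colAdd, hk0]
      · simp [colAdd, Ne.symm hki, hk0, hki]
  rw [Finset.sum_congr rfl fun k _ => this k, Finset.sum_add_distrib,
    Finset.sum_ite_eq' Finset.univ i (fun _ => M i j),
    Finset.sum_ite_eq' Finset.univ 0 (fun _ => if i = 0 then 0 else c i * M 0 j)]
  simp

theorem mul_rowAdd_apply (M : Matrix (Fin (n + 1)) (Fin (n + 1)) R) (c : Fin (n + 1) → R)
    (i j : Fin (n + 1)) :
    (M * rowAdd c) i j = M i j + if j = 0 then 0 else M i 0 * c j := by
  rw [Matrix.mul_apply]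
  have : ∀ k, M i k * rowAdd c k j
      = (if k = j then M i j else 0) + (if k = 0 then (if j = 0 then 0 else M i 0 * c j) else 0) := by
    intro k
    by_cases hk0 : k = 0
    · subst hk0
      by_cases hj : j = 0
      · subst hj; simp [rowAdd]
      · simp [rowAdd, hj, Ne.symm hj]
    · by_cases hkj : k = j
      · subst hkj; simp [rowAdd, hk0]
      · simp [rowAdd, hk0, hkj]
  rw [Finset.sum_congr rfl fun k _ => this k, Finset.sum_add_distrib,
    Finset.sum_ite_eq' Finset.univ j (fun _ => M i j),
    Finset.sum_ite_eq' Finset.univ 0 (fun _ => if j = 0 then 0 else M i 0 * c j)]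
  simp

theorem isElemProd_rowAdd (c : Fin (n + 1) → R) : IsElemProd (rowAdd c) := by
  suffices H : ∀ s : Finset (Fin (n + 1)), 0 ∉ s →
      IsElemProd (Matrix.of fun i j : Fin (n + 1) =>
        (if i = j then 1 else 0) + if i = 0 ∧ j ∈ s then c j else 0) by
    have h := H (Finset.univ.erase 0) (by simp)
    have e : rowAdd c = Matrix.of fun i j : Fin (n + 1) =>
        (if i = j then 1 else 0) + if i = 0 ∧ j ∈ Finset.univ.erase 0 then c j else 0 := by
      ext i j
      simp [rowAdd, Finset.mem_erase]
    rwa [e]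
  intro s
  induction s using Finset.induction_on with
  | empty =>
    intro _
    have e : (Matrix.of fun i j : Fin (n + 1) =>
        (if i = j then 1 else 0) + if i = 0 ∧ j ∈ (∅ : Finset (Fin (n+1))) then c j else 0)
        = (1 : Matrix (Fin (n+1)) (Fin (n+1)) R) := by
      ext i j
      simp [Matrix.one_apply]
    rw [e]; exact IsElemProd.one
  | @insert a s ha IH =>
    intro h0
    have ha0 : a ≠ 0 := fun h => h0 (by rw [h]; exact Finset.mem_insert_self _ _)
    have h0s : 0 ∉ s := fun h => h0 (Finset.mem_insert_of_mem h)
    have key : (Matrix.of fun i j : Fin (n + 1) =>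
        (if i = j then 1 else 0) + if i = 0 ∧ j ∈ insert a s then c j else 0)
        = Matrix.transvection 0 a (c a) * (Matrix.of fun i j : Fin (n + 1) =>
          (if i = j then 1 else 0) + if i = 0 ∧ j ∈ s then c j else 0) := by
      ext i j
      rcases eq_or_ne i 0 with rfl | hi
      · rw [Matrix.transvection_mul_apply_same]
        by_cases hj : j = a
        · subst hj
          simp [Matrix.of_apply, ha, ha0, Ne.symm ha0]
        · simp [Matrix.of_apply, hj, Finset.mem_insert, ha0, Ne.symm hj]
      · rw [Matrix.transvection_mul_apply_of_ne _ _ _ _ hi]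
        simp [Matrix.of_apply, hi]
    rw [key]
    exact (isElemProd_transvection (Ne.symm ha0) (c a)).mul (IH h0s)

theorem isElemProd_colAdd (c : Fin (n + 1) → R) : IsElemProd (colAdd c) := by
  rw [colAdd_eq_transpose]
  exact (isElemProd_rowAdd c).transpose

end RowCol

section W
variable {R : Type*} [CommRing R]

theorem isElemProd_whitehead_key (n : ℕ) (u v : R) (huv : u * v = 1) :
    Matrix.transvection (0 : Fin (n+2)) 1 u * (Matrix.transvection 1 0 (-v) *
      (Matrix.transvection 0 1 u * (Matrix.transvection 0 1 (-1) *
      (Matrix.transvection 1 0 1 * Matrix.transvection 0 1 (-1))))) =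
      Matrix.diagonal fun k : Fin (n+2) => if k = 0 then u else if k = 1 then v else 1 := by
  have h01 : (0 : Fin (n+2)) ≠ 1 := by simp [Fin.ext_iff]
  have Tapp : ∀ (i j : Fin (n+2)) (c : R) (a b : Fin (n+2)),
      Matrix.transvection i j c a b
        = (if a = b then 1 else 0) + (if i = a ∧ j = b then c else 0) := by
    intro i j c a b
    simp [Matrix.transvection, Matrix.one_apply, Matrix.single]
  ext a b
  rcases eq_or_ne a 0 with rfl | ha0
  · simp only [Matrix.transvection_mul_apply_same,
      Matrix.transvection_mul_apply_of_ne _ _ _ _ h01,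
      Matrix.transvection_mul_apply_of_ne _ _ _ _ h01.symm, Tapp]
    rcases eq_or_ne b 0 with rfl | hb0
    · simp [Matrix.diagonal_apply, h01, h01.symm]; linear_combination (-u) * huv
    · rcases eq_or_ne b 1 with rfl | hb1
      · simp [Matrix.diagonal_apply, h01, h01.symm]; linear_combination huv
      · simp [Matrix.diagonal_apply, h01, h01.symm, hb0, hb1, Ne.symm hb0, Ne.symm hb1]
  · rcases eq_or_ne a 1 with rfl | ha1
    · simp only [Matrix.transvection_mul_apply_same,
        Matrix.transvection_mul_apply_of_ne _ _ _ _ h01,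
        Matrix.transvection_mul_apply_of_ne _ _ _ _ h01.symm, Tapp]
      rcases eq_or_ne b 0 with rfl | hb0
      · simp [Matrix.diagonal_apply, h01, h01.symm]; linear_combination -huv
      · rcases eq_or_ne b 1 with rfl | hb1
        · simp [Matrix.diagonal_apply, h01, h01.symm]
        · simp [Matrix.diagonal_apply, h01, h01.symm, hb0, hb1, Ne.symm hb0, Ne.symm hb1]
    · simp only [Matrix.transvection_mul_apply_of_ne _ _ _ _ ha0,
        Matrix.transvection_mul_apply_of_ne _ _ _ _ ha1, Tapp]
      simp [Matrix.diagonal_apply, ha0, ha1, Ne.symm ha0, Ne.symm ha1]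
end W
section Emb
variable {R : Type*} [CommRing R] {m : ℕ}

/-- Extend a matrix by an identity row/column at index `0`. -/
def embS (B : Matrix (Fin m) (Fin m) R) : Matrix (Fin (m+1)) (Fin (m+1)) R :=
  Matrix.of fun i j => if hi : i = 0 then (if j = 0 then 1 else 0)
    else if hj : j = 0 then 0 else B (i.pred hi) (j.pred hj)

@[simp] theorem embS_zero_zero (B : Matrix (Fin m) (Fin m) R) : embS B 0 0 = 1 := by
  simp [embS]

@[simp] theorem embS_zero_succ (B : Matrix (Fin m) (Fin m) R) (j : Fin m) :
    embS B 0 j.succ = 0 := by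
  simp [embS, (Fin.succ_ne_zero j)]

@[simp] theorem embS_succ_zero (B : Matrix (Fin m) (Fin m) R) (i : Fin m) :
    embS B i.succ 0 = 0 := by
  simp [embS, (Fin.succ_ne_zero i)]

@[simp] theorem embS_succ_succ (B : Matrix (Fin m) (Fin m) R) (i j : Fin m) :
    embS B i.succ j.succ = B i j := by
  simp [embS, Fin.succ_ne_zero]

theorem embS_mul (B C : Matrix (Fin m) (Fin m) R) : embS B * embS C = embS (B * C) := by
  ext i j
  rw [Matrix.mul_apply]
  induction i using Fin.cases with
  | zero =>
    induction j using Fin.cases with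
    | zero => simp [Fin.sum_univ_succ]
    | succ b => simp [Fin.sum_univ_succ]
  | succ a =>
    induction j using Fin.cases with
    | zero => simp [Fin.sum_univ_succ]
    | succ b => simp [Fin.sum_univ_succ, Matrix.mul_apply]

theorem embS_one : embS (1 : Matrix (Fin m) (Fin m) R) = 1 := by
  ext i j
  induction i using Fin.cases with
  | zero =>
    induction j using Fin.cases with
    | zero => simp
    | succ b => simp [Matrix.one_apply, (Fin.succ_ne_zero b).symm]
  | succ a =>
    induction j using Fin.cases with
    | zero => simp [Matrix.one_apply, Fin.succ_ne_zero a]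
    | succ b => simp [Matrix.one_apply, Fin.succ_inj]

theorem embS_transvection {i j : Fin m} (c : R) :
    embS (Matrix.transvection i j c) = Matrix.transvection i.succ j.succ c := by
  have Tapp : ∀ (N : ℕ) (i j : Fin N) (c : R) (a b : Fin N),
      Matrix.transvection i j c a b
        = (if a = b then 1 else 0) + (if i = a ∧ j = b then c else 0) := by
    intro N i j c a b
    simp [Matrix.transvection, Matrix.one_apply, Matrix.single]
  ext a b
  induction a using Fin.cases with
  | zero =>
    induction b using Fin.cases with
    | zero => simp [Tapp, Fin.succ_ne_zero]
    | succ b => simp [Tapp, Fin.succ_ne_zero, (Fin.succ_ne_zero b).symm]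
  | succ a =>
    induction b using Fin.cases with
    | zero => simp [Tapp, Fin.succ_ne_zero, (Fin.succ_ne_zero a)]
    | succ b => simp [Tapp, Fin.succ_inj]
end Emb
namespace GoodWeight
namespace Ap
variable {w : GoodWeight}

/-- The "Gelfand transform": `a ↦ (p(t)·â(t))ₜ`, a ring hom into the ring of functions. -/
noncomputable def valHom : w.Ap →+* (ℕ → ℂ) where
  toFun a := fun t => (w.p t : ℂ) * a.1 t
  map_one' := funext fun t => by
    show (w.p t : ℂ) * ((w.p t : ℂ))⁻¹ = 1
    have h : ((w.p t : ℝ) : ℂ) ≠ 0 := by exact_mod_cast (w.pos t).ne'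
    field_simp
  map_mul' a b := funext fun t => by
    show (w.p t : ℂ) * ((w.p t : ℂ) * a.1 t * b.1 t)
      = ((w.p t : ℂ) * a.1 t) * ((w.p t : ℂ) * b.1 t)
    ring
  map_zero' := funext fun t => by
    show (w.p t : ℂ) * 0 = 0
    ring
  map_add' a b := funext fun t => by
    show (w.p t : ℂ) * (a.1 t + b.1 t) = (w.p t : ℂ) * a.1 t + (w.p t : ℂ) * b.1 t
    ring

theorem valHom_injective : Function.Injective (valHom (w := w)) := by
  intro a b hab
  apply Subtype.ext
  funext t
  have h := congrFun hab t
  have hp : ((w.p t : ℝ) : ℂ) ≠ 0 := by exact_mod_cast (w.pos t).ne'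
  exact mul_left_cancel₀ hp h

theorem valHom_bound (a : w.Ap) : ∃ C : ℝ, ∀ t, Complex.abs (valHom a t) ≤ C := by
  obtain ⟨C, hC⟩ := a.2
  refine ⟨C, fun t => ?_⟩
  show Complex.abs ((w.p t : ℂ) * a.1 t) ≤ C
  rw [_root_.map_mul, Complex.abs_ofReal, abs_of_pos (w.pos t)]
  exact hC t

/-- Build an element of `Ap` from a bounded family of "values". -/
noncomputable def mk (x : ℕ → ℂ) (h : ∃ C : ℝ, ∀ t, Complex.abs (x t) ≤ C) : w.Ap :=
  ⟨fun t => x t / (w.p t : ℂ), by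
    obtain ⟨C, hC⟩ := h
    refine ⟨C, fun t => ?_⟩
    rw [map_div₀, Complex.abs_ofReal, abs_of_pos (w.pos t)]
    rw [mul_div_cancel₀ _ (w.pos t).ne']
    exact hC t⟩

@[simp] theorem valHom_mk (x : ℕ → ℂ) (h : ∃ C : ℝ, ∀ t, Complex.abs (x t) ≤ C) (t : ℕ) :
    valHom (mk x h : w.Ap) t = x t := by
  show (w.p t : ℂ) * (x t / (w.p t : ℂ)) = x t
  have hp : ((w.p t : ℝ) : ℂ) ≠ 0 := by exact_mod_cast (w.pos t).ne'
  field_simp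

theorem isUnit_of_lb (a : w.Ap) (ε : ℝ) (hε : 0 < ε)
    (h : ∀ t, ε ≤ Complex.abs (valHom a t)) : IsUnit a := by
  have hne : ∀ t, valHom a t ≠ 0 := by
    intro t h0
    have := h t
    rw [h0] at this
    simp at this
    linarith
  have hb : ∃ C : ℝ, ∀ t, Complex.abs ((valHom a t)⁻¹) ≤ C := by
    refine ⟨ε⁻¹, fun t => ?_⟩
    rw [map_inv₀]
    exact inv_anti₀ hε (h t)
  refine IsUnit.of_mul_eq_one (a := a) (mk (fun t => (valHom a t)⁻¹) hb) ?_
  apply valHom_injective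
  funext t
  rw [_root_.map_mul, _root_.map_one]
  show valHom a t * valHom (mk _ hb : w.Ap) t = 1
  rw [valHom_mk]
  exact mul_inv_cancel₀ (hne t)

/-- The key analytic pivot lemma: if the column `v` is unimodular, then one can add
a combination of the entries `v i` to `v 0` to make it invertible. -/
theorem pivot {N : ℕ} (v b : Fin (N + 1) → w.Ap) (hvb : ∑ i, b i * v i = 1) :
    ∃ c : Fin (N + 1) → w.Ap, c 0 = 0 ∧ IsUnit (v 0 + ∑ i, c i * v i) := by
  classical
  -- uniform bound on the `b i`
  choose f hf using fun i => valHom_bound (b i)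
  set Cb : ℝ := 1 + ∑ i, max (f i) 0 with hCb_def
  have hCb : 0 < Cb := by
    have : (0:ℝ) ≤ ∑ i, max (f i) 0 :=
      Finset.sum_nonneg fun i _ => le_max_right _ _
    linarith
  have hCbB : ∀ i t, Complex.abs (valHom (b i) t) ≤ Cb := by
    intro i t
    refine le_trans (hf i t) (le_trans (le_max_left _ 0) ?_)
    rw [hCb_def]
    have h1 : max (f i) 0 ≤ ∑ j, max (f j) 0 :=
      Finset.single_le_sum (f := fun j => max (f j) 0) (fun j _ => le_max_right _ _)
        (Finset.mem_univ i)
    linarith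
  set δ : ℝ := ((N + 1 : ℝ) * Cb)⁻¹ with hδ_def
  have hN1 : (0:ℝ) < (N + 1 : ℝ) := by positivity
  have hδ : 0 < δ := by positivity
  -- pointwise, some entry of the column is at least δ
  have key : ∀ t, ∃ i, δ ≤ Complex.abs (valHom (v i) t) := by
    intro t
    by_contra hcon
    push_neg at hcon
    have h1 : Complex.abs (valHom (1 : w.Ap) t) = 1 := by
      rw [_root_.map_one]
      show Complex.abs 1 = 1
      simp
    rw [← hvb, _root_.map_sum] at h1
    have h1' : Complex.abs (∑ i, valHom (b i * v i) t) = 1 := by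
      rw [← h1]
      congr 1
      exact (Finset.sum_apply t Finset.univ _).symm
    have h2 : Complex.abs (∑ i, valHom (b i * v i) t)
        ≤ ∑ i, Cb * Complex.abs (valHom (v i) t) := by
      refine le_trans (Complex.abs.sum_le _ _) ?_
      refine Finset.sum_le_sum fun i _ => ?_
      rw [_root_.map_mul]
      show Complex.abs (valHom (b i) t * valHom (v i) t) ≤ _
      rw [_root_.map_mul]
      exact mul_le_mul_of_nonneg_right (hCbB i t) (Complex.abs.nonneg _)
    have h3 : ∑ i, Cb * Complex.abs (valHom (v i) t)
        < ∑ _i : Fin (N + 1), Cb * δ := by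
      refine Finset.sum_lt_sum_of_nonempty Finset.univ_nonempty fun i _ =>
        mul_lt_mul_of_pos_left (hcon i) hCb
    have h4 : ∑ _i : Fin (N + 1), Cb * δ = 1 := by
      rw [Finset.sum_const, Finset.card_univ, Fintype.card_fin]
      rw [hδ_def]
      field_simp
      rw [nsmul_eq_mul]; push_cast
      exact mul_one_div_cancel hN1.ne'
    rw [h1'] at h2
    rw [h4] at h3
    linarith
  -- the pivot choice
  set i₀ : ℕ → Fin (N + 1) := fun t => (key t).choose with hi₀_def
  have hi₀ : ∀ t, δ ≤ Complex.abs (valHom (v (i₀ t)) t) := fun t => (key t).choose_spec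
  set cond : ℕ → Prop := fun t => Complex.abs (valHom (v 0) t) < δ / 2 with hcond_def
  have hi₀ne : ∀ t, cond t → i₀ t ≠ 0 := by
    intro t ht h0
    have := hi₀ t
    rw [h0] at this
    have : δ < δ / 2 := lt_of_le_of_lt this ht
    linarith
  -- the coefficients
  have hbound : ∀ i : Fin (N + 1), ∃ C : ℝ, ∀ t, Complex.abs
      ((if cond t ∧ i₀ t = i ∧ i ≠ 0 then (1 - valHom (v 0) t) / valHom (v i) t else 0)) ≤ C := by
    intro i
    refine ⟨(1 + δ / 2) / δ, fun t => ?_⟩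
    by_cases h : cond t ∧ i₀ t = i ∧ i ≠ 0
    · rw [if_pos h]
      obtain ⟨h1, h2, _⟩ := h
      rw [map_div₀]
      have hv : δ ≤ Complex.abs (valHom (v i) t) := h2 ▸ hi₀ t
      have hnum : Complex.abs (1 - valHom (v 0) t) ≤ 1 + δ / 2 := by
        refine le_trans (Complex.abs.sub_le_add _ _) ?_
        simp only [_root_.map_one]
        have := h1
        rw [hcond_def] at this
        linarith
      exact div_le_div₀ (by positivity) hnum hδ hv
    · rw [if_neg h]
      simp
      positivity
  set c : Fin (N + 1) → w.Ap := fun i => mk (fun t =>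
    if cond t ∧ i₀ t = i ∧ i ≠ 0 then (1 - valHom (v 0) t) / valHom (v i) t else 0)
    (hbound i) with hc_def
  have hvc : ∀ i t, valHom (c i) t
      = if cond t ∧ i₀ t = i ∧ i ≠ 0 then (1 - valHom (v 0) t) / valHom (v i) t else 0 := by
    intro i t
    rw [hc_def]
    exact valHom_mk _ _ t
  have hvne : ∀ t, valHom (v (i₀ t)) t ≠ 0 := by
    intro t h0
    have := hi₀ t
    rw [h0] at this
    simp at this
    linarith
  refine ⟨c, ?_, ?_⟩
  · apply valHom_injective
    funext t
    rw [_root_.map_zero]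
    show valHom (c 0) t = (0 : ℕ → ℂ) t
    rw [hvc]
    simp
  · have hval : ∀ t, valHom (v 0 + ∑ i, c i * v i) t
        = if cond t then 1 else valHom (v 0) t := by
      intro t
      have e1 : valHom (v 0 + ∑ i, c i * v i) t
          = valHom (v 0) t + ∑ i, valHom (c i) t * valHom (v i) t := by
        rw [_root_.map_add, _root_.map_sum]
        have : (∑ i, valHom (c i * v i)) t = ∑ i, valHom (c i * v i) t :=
          Finset.sum_apply t Finset.univ _
        rw [Pi.add_apply, this]
        congr 1
        refine Finset.sum_congr rfl fun i _ => ?_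
        rw [_root_.map_mul]
        rfl
      rw [e1]
      by_cases hc : cond t
      · rw [if_pos hc]
        have hsum : ∑ i, valHom (c i) t * valHom (v i) t = 1 - valHom (v 0) t := by
          rw [Finset.sum_eq_single (i₀ t)]
          · rw [hvc, if_pos ⟨hc, rfl, hi₀ne t hc⟩, div_mul_cancel₀ _ (hvne t)]
          · intro i _ hi
            rw [hvc, if_neg, zero_mul]
            rintro ⟨_, h2, _⟩
            exact hi h2.symm
          · intro h
            exact absurd (Finset.mem_univ _) h
        rw [hsum]
        ring
      · rw [if_neg hc]
        have hsum : ∑ i, valHom (c i) t * valHom (v i) t = 0 := by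
          refine Finset.sum_eq_zero fun i _ => ?_
          rw [hvc, if_neg, zero_mul]
          rintro ⟨h1, _⟩
          exact hc h1
        rw [hsum]
        ring
    refine isUnit_of_lb _ (min (δ / 2) 1) (by positivity) fun t => ?_
    rw [hval t]
    by_cases hc : cond t
    · rw [if_pos hc]
      simp
    · rw [if_neg hc]
      simp only [hcond_def] at hc
      push_neg at hc
      exact le_trans (min_le_left _ _) hc

end Ap
end GoodWeight

section More
variable {R : Type*} [CommRing R] {N m n : ℕ}

theorem det_list_prod_transvections (L : List (Matrix (Fin N) (Fin N) R))
    (hL : ∀ E ∈ L, ∃ (i j : Fin N) (c : R), i ≠ j ∧ E = Matrix.transvection i j c) :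
    L.prod.det = 1 := by
  induction L with
  | nil => simp
  | cons E L IH =>
    rw [List.prod_cons, Matrix.det_mul]
    obtain ⟨i, j, c, hij, rfl⟩ := hL E List.mem_cons_self
    rw [Matrix.det_transvection_of_ne _ _ hij, one_mul]
    exact IH fun F hF => hL F (List.mem_cons_of_mem _ hF)

theorem IsElemProd.det_eq_one {A : Matrix (Fin N) (Fin N) R} (hA : IsElemProd A) :
    A.det = 1 := by
  obtain ⟨L, hL, rfl⟩ := hA
  exact det_list_prod_transvections L hL

theorem det_embS (B : Matrix (Fin m) (Fin m) R) : (embS B).det = B.det := by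
  rw [Matrix.det_succ_column_zero, Fin.sum_univ_succ]
  have h1 : ∀ i : Fin m, embS B i.succ 0 = 0 := fun i => embS_succ_zero B i
  have h3 : (embS B).submatrix Fin.succ Fin.succ = B := by
    ext a b
    simp [Matrix.submatrix_apply]
  simp [h1, h3]

theorem isElemProd_embS_aux (L : List (Matrix (Fin m) (Fin m) R))
    (hL : ∀ E ∈ L, ∃ (i j : Fin m) (c : R), i ≠ j ∧ E = Matrix.transvection i j c) :
    IsElemProd (embS L.prod) := by
  induction L with
  | nil => rw [List.prod_nil, embS_one]; exact IsElemProd.one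
  | cons E L IH =>
    rw [List.prod_cons, ← embS_mul]
    obtain ⟨i, j, c, hij, rfl⟩ := hL E List.mem_cons_self
    rw [embS_transvection]
    refine (isElemProd_transvection ?_ c).mul (IH fun F hF => hL F (List.mem_cons_of_mem _ hF))
    simp [Fin.succ_inj, hij]

theorem IsElemProd.embS' {B : Matrix (Fin m) (Fin m) R} (hB : IsElemProd B) :
    IsElemProd (embS B) := by
  obtain ⟨L, hL, rfl⟩ := hB
  exact isElemProd_embS_aux L hL

theorem rowAdd_neg_mul (c : Fin (n + 1) → R) :
    rowAdd (fun k => -c k) * rowAdd c = 1 := by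
  ext i j
  rcases eq_or_ne i 0 with rfl | hi
  · rw [rowAdd_mul_apply_zero]
    rcases eq_or_ne j 0 with rfl | hj
    · have hs : (∑ k, if k = 0 then 0 else -c k * rowAdd c k 0) = 0 := by
        refine Finset.sum_eq_zero fun k _ => ?_
        rcases eq_or_ne k 0 with rfl | hk
        · simp
        · rw [if_neg hk]
          have h0 : rowAdd c k 0 = 0 := by simp [rowAdd, hk]
          rw [h0, mul_zero]
      rw [hs]
      simp [rowAdd, Matrix.one_apply]
    · have hs : (∑ k, if k = 0 then 0 else -c k * rowAdd c k j) = -c j := by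
        rw [Finset.sum_eq_single j]
        · rw [if_neg hj]
          have h1 : rowAdd c j j = 1 := by simp [rowAdd, hj]
          rw [h1, mul_one]
        · intro k _ hk
          rcases eq_or_ne k 0 with rfl | hk0
          · simp
          · rw [if_neg hk0]
            have h0 : rowAdd c k j = 0 := by simp [rowAdd, hk, hk0]
            rw [h0, mul_zero]
        · intro h
          exact absurd (Finset.mem_univ _) h
      rw [hs]
      simp [rowAdd, hj, Ne.symm hj, Matrix.one_apply]
  · rw [rowAdd_mul_apply_ne _ _ hi]
    simp [rowAdd, Matrix.one_apply, hi]

theorem rowAdd_mul_rowAdd_neg (c : Fin (n + 1) → R) :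
    rowAdd c * rowAdd (fun k => -c k) = 1 := by
  have h := rowAdd_neg_mul (fun k => -c k) (R := R)
  simpa using h

theorem colAdd_neg_mul (c : Fin (n + 1) → R) :
    colAdd (fun k => -c k) * colAdd c = 1 := by
  rw [colAdd_eq_transpose, colAdd_eq_transpose, ← Matrix.transpose_mul,
    rowAdd_mul_rowAdd_neg, Matrix.transpose_one]

theorem isElemProd_whitehead (n : ℕ) (u v : R) (huv : u * v = 1) :
    IsElemProd (Matrix.diagonal fun k : Fin (n+2) => if k = 0 then u else if k = 1 then v else 1) := by
  have h01 : (0 : Fin (n+2)) ≠ 1 := by simp [Fin.ext_iff]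
  rw [← isElemProd_whitehead_key n u v huv]
  exact (isElemProd_transvection h01 u).mul ((isElemProd_transvection h01.symm (-v)).mul
    ((isElemProd_transvection h01 u).mul ((isElemProd_transvection h01 (-1)).mul
    ((isElemProd_transvection h01.symm 1).mul (isElemProd_transvection h01 (-1))))))

end More

theorem sl_eq_elementary_aux (w : GoodWeight) :
    ∀ (n : ℕ) (M : Matrix (Fin n) (Fin n) w.Ap), M.det = 1 → IsElemProd M := by
  intro n
  induction n with
  | zero =>
    intro M _
    refine ⟨[], by simp, ?_⟩
    rw [List.prod_nil]
    ext i j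
    exact i.elim0
  | succ m IH =>
    cases m with
    | zero =>
      intro M hM
      rw [Matrix.det_fin_one] at hM
      refine ⟨[], by simp, ?_⟩
      rw [List.prod_nil]
      haveI : Subsingleton (Fin (0+1)) := by
        convert Fin.subsingleton_one
      ext i j
      have hi : i = 0 := Subsingleton.elim i 0
      have hj : j = 0 := Subsingleton.elim j 0
      subst hi; subst hj
      rw [hM, Matrix.one_apply_eq]
    | succ k =>
      intro M hM
      -- the first column of `M` is unimodular
      have hub : ∑ i, M.adjugate 0 i * M i 0 = 1 := by
        have h : (M.adjugate * M) 0 0 = (M.det • (1 : Matrix (Fin (k+2)) (Fin (k+2)) w.Ap)) 0 0 := by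
          rw [Matrix.adjugate_mul]
        rw [Matrix.mul_apply, hM] at h
        simpa using h
      obtain ⟨c, hc0, hu⟩ := GoodWeight.Ap.pivot (fun i => M i 0) (fun i => M.adjugate 0 i) hub
      set u : w.Ap := M 0 0 + ∑ i, c i * M i 0 with hu_def
      obtain ⟨ui, hui⟩ := hu.exists_right_inv
      have hui' : ui * u = 1 := by rw [mul_comm]; exact hui
      set M₁ := rowAdd c * M with hM₁_def
      have hM₁00 : M₁ 0 0 = u := by
        rw [hM₁_def, rowAdd_mul_apply_zero, hu_def]
        congr 1
        refine Finset.sum_congr rfl fun i _ => ?_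
        rcases eq_or_ne i 0 with rfl | hi
        · rw [if_pos rfl, hc0, zero_mul]
        · rw [if_neg hi]
      set c' : Fin (k+2) → w.Ap := fun i => if i = 0 then 0 else -(M₁ i 0) * ui with hc'_def
      set M₂ := colAdd c' * M₁ with hM₂_def
      have hM₂0 : ∀ j, M₂ 0 j = M₁ 0 j := fun j => by
        rw [hM₂_def, colAdd_mul_apply]; simp
      have hM₂00 : M₂ 0 0 = u := by rw [hM₂0 0, hM₁00]
      have hM₂col : ∀ i, i ≠ 0 → M₂ i 0 = 0 := by
        intro i hi
        rw [hM₂_def, colAdd_mul_apply, if_neg hi, hc'_def]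
        simp only [if_neg hi]
        rw [hM₁00]
        calc M₁ i 0 + -M₁ i 0 * ui * u = M₁ i 0 + -M₁ i 0 * (ui * u) := by ring
          _ = 0 := by rw [hui']; ring
      set c'' : Fin (k+2) → w.Ap := fun j => if j = 0 then 0 else -ui * M₂ 0 j with hc''_def
      set M₃ := M₂ * rowAdd c'' with hM₃_def
      have hM₃00 : M₃ 0 0 = u := by
        rw [hM₃_def, mul_rowAdd_apply]
        simp [hM₂00]
      have hM₃row : ∀ j, j ≠ 0 → M₃ 0 j = 0 := by
        intro j hj
        rw [hM₃_def, mul_rowAdd_apply, if_neg hj, hc''_def]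
        simp only [if_neg hj]
        rw [hM₂00]
        calc M₂ 0 j + u * (-ui * M₂ 0 j) = M₂ 0 j + -(u * ui) * M₂ 0 j := by ring
          _ = 0 := by rw [hui]; ring
      have hM₃col : ∀ i, i ≠ 0 → M₃ i 0 = 0 := by
        intro i hi
        rw [hM₃_def, mul_rowAdd_apply]
        simp [hM₂col i hi]
      set B : Matrix (Fin (k+1)) (Fin (k+1)) w.Ap :=
        Matrix.of (fun a b => M₃ a.succ b.succ) with hB_def
      set B' : Matrix (Fin (k+1)) (Fin (k+1)) w.Ap :=
        Matrix.of (fun a b => (if a = 0 then u else 1) * B a b) with hB'_def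
      have hM₃eq : M₃ = Matrix.diagonal
          (fun i : Fin (k+2) => if i = 0 then u else if i = 1 then ui else 1) * embS B' := by
        ext i j
        rw [Matrix.diagonal_mul]
        induction i using Fin.cases with
        | zero =>
          induction j using Fin.cases with
          | zero => simp [hM₃00]
          | succ b => simp [hM₃row _ (Fin.succ_ne_zero b)]
        | succ a =>
          induction j using Fin.cases with
          | zero => simp [hM₃col _ (Fin.succ_ne_zero a)]
          | succ b =>
            rw [embS_succ_succ]
            rcases eq_or_ne a 0 with rfl | ha
            · rw [hB'_def]
              simp only [Matrix.of_apply, if_pos rfl, Fin.succ_zero_eq_one]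
              have h1 : ((1 : Fin (k+2)) = 0) = False := by
                simp [Fin.ext_iff]
              simp only [h1, if_false, if_pos rfl]
              rw [hB_def]
              simp only [Matrix.of_apply]
              rw [Fin.succ_zero_eq_one]
              calc M₃ 1 b.succ = 1 * M₃ 1 b.succ := by rw [one_mul]
                _ = ui * (u * M₃ 1 b.succ) := by rw [← mul_assoc, hui']
            · have h1 : (a.succ : Fin (k+2)) ≠ 0 := Fin.succ_ne_zero a
              have h2 : (a.succ : Fin (k+2)) ≠ 1 := by
                intro h
                rw [← Fin.succ_zero_eq_one] at h
                exact ha (Fin.succ_injective _ h)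
              rw [hB'_def]
              simp only [Matrix.of_apply, if_neg h1, if_neg h2, if_neg ha, one_mul]
              rw [hB_def]
              rfl
      have hdetM₃ : M₃.det = 1 := by
        rw [hM₃_def, hM₂_def, hM₁_def, Matrix.det_mul, Matrix.det_mul, Matrix.det_mul]
        rw [(isElemProd_rowAdd c).det_eq_one, (isElemProd_colAdd c').det_eq_one,
          (isElemProd_rowAdd c'').det_eq_one, hM]
        ring
      have hdetB' : B'.det = 1 := by
        have h := hdetM₃
        rw [hM₃eq, Matrix.det_mul, Matrix.det_diagonal, det_embS] at h
        have hprod : (∏ i : Fin (k+2), if i = 0 then u else if i = 1 then ui else 1) = u * ui := by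
          rw [Fin.prod_univ_succ, Fin.prod_univ_succ]
          have hone : ∀ a : Fin k, (if (a.succ.succ : Fin (k+2)) = 0 then u
              else if a.succ.succ = 1 then ui else 1) = 1 := by
            intro a
            have h1 : (a.succ.succ : Fin (k+2)) ≠ 0 := Fin.succ_ne_zero _
            have h2 : (a.succ.succ : Fin (k+2)) ≠ 1 := by
              intro h
              rw [← Fin.succ_zero_eq_one] at h
              exact Fin.succ_ne_zero _ (Fin.succ_injective _ h)
            rw [if_neg h1, if_neg h2]
          rw [Finset.prod_congr rfl fun a _ => hone a]
          have h1 : ((Fin.succ 0 : Fin (k+2)) = 0) = False := by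
            simp [Fin.succ_ne_zero]
          simp [Fin.succ_zero_eq_one]
        rw [hprod, hui, one_mul] at h
        exact h
      have hB'elem : IsElemProd B' := IH B' hdetB'
      have hM₂eq : M₂ = M₃ * rowAdd (fun j => -c'' j) := by
        rw [hM₃_def, Matrix.mul_assoc, rowAdd_mul_rowAdd_neg, mul_one]
      have hMeq : M = rowAdd (fun i => -c i) * (colAdd (fun i => -c' i) * M₂) := by
        rw [hM₂_def, hM₁_def, ← Matrix.mul_assoc (colAdd fun i => -c' i), colAdd_neg_mul,
          one_mul, ← Matrix.mul_assoc, rowAdd_neg_mul, one_mul]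
      rw [hMeq, hM₂eq, hM₃eq]
      exact (isElemProd_rowAdd _).mul ((isElemProd_colAdd _).mul
        (((isElemProd_whitehead k u ui hui).mul hB'elem.embS').mul (isElemProd_rowAdd _)))


/-- `SL_n(A(p)) = E_n(A(p))`: every matrix over `A(p)` of determinant `1 = ε`
is a finite product of elementary matrices (transvections `I + α e_{ij}`, `i ≠ j`). -/
theorem sl_eq_elementary (w : GoodWeight) (hg : w.Grows) (n : ℕ)
    (M : Matrix (Fin n) (Fin n) w.Ap) (hM : M.det = 1) :
    ∃ L : List (Matrix (Fin n) (Fin n) w.Ap),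
      (∀ E ∈ L, ∃ (i j : Fin n) (c : w.Ap), i ≠ j ∧ E = Matrix.transvection i j c) ∧
      L.prod = M :=
  sl_eq_elementary_aux w n M hM
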